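/- Let TC_hat(N) denote the number of tree-child networks with N non-root nodes, all N of which are bijectively labeled by {1,…,N}, and let TC(n,k) denote the number of tree-child networks with n labeled leaves and k reticulation nodes. Then for odd N, TC_hat(N) = ∑_{n=⌈(N+3)/4⌉}^{(N+1)/2} (N!/n!) * TC(n, (N+1)/2 - n). -/

import Mathlib

/-- In-degree of a vertex in a digraph given by an adjacency relation. -/
noncomputable def indeg {V : Type} (adj : V → V → Prop) (v : V) : ℕ := Nat.card {u // adj u v}

/-- Out-degree of a vertex in a digraph given by an adjacency relation. -/
noncomputable def outdeg {V : Type} (adj : V → V → Prop) (v : V) : ℕ := Nat.card {u // adj v u}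

/-- A (rooted, binary) phylogenetic network: a connected rooted DAG whose root has
indegree 0 and outdegree 1, and whose non-root vertices are leaves (indegree 1,
outdegree 0), tree nodes (indegree 1, outdegree 2), or reticulation nodes
(indegree 2, outdegree 1). (Adjacency is a relation, so there are no parallel edges.) -/
structure IsPhyloNetwork {V : Type} [Finite V] (adj : V → V → Prop) (root : V) : Prop where
  acyclic : ∀ v, ¬ Relation.TransGen adj v v
  connected : ∀ v, Relation.ReflTransGen adj root v
  root_indeg : indeg adj root = 0
  root_outdeg : outdeg adj root = 1
  node_types : ∀ v, v ≠ root →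
    (indeg adj v = 1 ∧ outdeg adj v = 0) ∨
    (indeg adj v = 1 ∧ outdeg adj v = 2) ∨
    (indeg adj v = 2 ∧ outdeg adj v = 1)

/-- A leaf: indegree 1 and outdegree 0. -/
def IsLeaf {V : Type} (adj : V → V → Prop) (v : V) : Prop :=
  indeg adj v = 1 ∧ outdeg adj v = 0

/-- A tree node: indegree 1 and outdegree 2. -/
def IsTreeNode {V : Type} (adj : V → V → Prop) (v : V) : Prop :=
  indeg adj v = 1 ∧ outdeg adj v = 2

/-- A reticulation node: indegree 2 and outdegree 1. -/
def IsReticulation {V : Type} (adj : V → V → Prop) (v : V) : Prop :=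
  indeg adj v = 2 ∧ outdeg adj v = 1

/-- A tree-child network: a phylogenetic network in which every node which is not a
leaf has at least one child which is not a reticulation node. -/
def IsTreeChildNetwork {V : Type} [Finite V] (adj : V → V → Prop) (root : V) : Prop :=
  IsPhyloNetwork adj root ∧
    ∀ v, ¬ IsLeaf adj v → ∃ u, adj v u ∧ ¬ IsReticulation adj u

/-- Tree-child networks with `N` non-root nodes, all bijectively labeled: concretely,
tree-child networks on the vertex set `Fin (N+1)` with root `0` (the non-root nodes
carry the labels `1,…,N`; since only the root is unlabeled and it is determined as the
unique indegree-0 node, isomorphism classes correspond exactly to such concrete networks). -/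
def NodeLabeledTC (N : ℕ) : Type :=
  {adj : Fin (N + 1) → Fin (N + 1) → Prop // IsTreeChildNetwork adj 0}

/-- `TC_hat(N)`: the number of tree-child networks with `N` labeled non-root nodes. -/
noncomputable def TChat (N : ℕ) : ℕ := Nat.card (NodeLabeledTC N)

/-- Concrete representatives of tree-child networks with `n` labeled leaves and `k`
reticulation nodes: networks on the `2(n+k)` vertices `0,…,2(n+k)-1` with root `0`
whose leaves are exactly the vertices `1,…,n` (carrying the leaf labels). -/
def LeafLabeledTCRep (n k : ℕ) : Type :=
  {adj : Fin (2 * (n + k)) → Fin (2 * (n + k)) → Prop //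
    ∃ h : 0 < 2 * (n + k), IsTreeChildNetwork adj ⟨0, h⟩ ∧
      ∀ v : Fin (2 * (n + k)), IsLeaf adj v ↔ (1 ≤ v.val ∧ v.val ≤ n)}

/-- Two representatives are isomorphic as leaf-labeled networks if they differ by a
relabeling of the vertices fixing the root and the labeled leaves `1,…,n`. -/
def LeafLabeledIso (n k : ℕ) (A B : LeafLabeledTCRep n k) : Prop :=
  ∃ σ : Equiv.Perm (Fin (2 * (n + k))),
    (∀ v : Fin (2 * (n + k)), v.val ≤ n → σ v = v) ∧
    ∀ u v, A.1 u v ↔ B.1 (σ u) (σ v)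

/-- `TC(n,k)`: the number of tree-child networks with `n` labeled leaves and `k`
reticulation nodes, i.e. the number of representatives up to leaf-labeled isomorphism. -/
noncomputable def TCcount (n k : ℕ) : ℕ := Nat.card (Quot (LeafLabeledIso n k))

namespace TCaux

variable {V W : Type}

/-! ### Relabeling -/

def relabel (e : V ≃ W) (adj : V → V → Prop) : W → W → Prop :=
  fun a b => adj (e.symm a) (e.symm b)

lemma relabel_apply (e : V ≃ W) (adj : V → V → Prop) (u v : V) :
    relabel e adj (e u) (e v) ↔ adj u v := by simp [relabel]

lemma relabel_relabel (e : V ≃ W) (adj : V → V → Prop) :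
    relabel e.symm (relabel e adj) = adj := by
  funext a b; exact propext (by simp [relabel])

lemma relabel_relabel' (e : V ≃ W) (adj : W → W → Prop) :
    relabel e (relabel e.symm adj) = adj := by
  funext a b; exact propext (by simp [relabel])

lemma indeg_relabel (e : V ≃ W) (adj : V → V → Prop) (v : V) :
    indeg (relabel e adj) (e v) = indeg adj v := by
  unfold indeg
  exact Nat.card_congr (e.symm.subtypeEquiv (fun u => by simp [relabel]))

lemma outdeg_relabel (e : V ≃ W) (adj : V → V → Prop) (v : V) :
    outdeg (relabel e adj) (e v) = outdeg adj v := by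
  unfold outdeg
  exact Nat.card_congr (e.symm.subtypeEquiv (fun u => by simp [relabel]))

lemma isLeaf_relabel (e : V ≃ W) (adj : V → V → Prop) (v : V) :
    IsLeaf (relabel e adj) (e v) ↔ IsLeaf adj v := by
  simp [IsLeaf, indeg_relabel, outdeg_relabel]

lemma isRetic_relabel (e : V ≃ W) (adj : V → V → Prop) (v : V) :
    IsReticulation (relabel e adj) (e v) ↔ IsReticulation adj v := by
  simp [IsReticulation, indeg_relabel, outdeg_relabel]

lemma transGen_relabel (e : V ≃ W) (adj : V → V → Prop) (u v : V) :
    Relation.TransGen (relabel e adj) (e u) (e v) ↔ Relation.TransGen adj u v := by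
  constructor
  · intro h
    have := Relation.TransGen.lift (r := relabel e adj) e.symm
      (fun a b hab => hab) _ _ h
    simpa [Function.onFun] using this
  · intro h
    exact Relation.TransGen.lift e (fun a b hab => by simp [Function.onFun, relabel, hab]) _ _ h

lemma reflTransGen_relabel (e : V ≃ W) (adj : V → V → Prop) (u v : V) :
    Relation.ReflTransGen (relabel e adj) (e u) (e v) ↔ Relation.ReflTransGen adj u v := by
  constructor
  · intro h
    have := Relation.ReflTransGen.lift (r := relabel e adj) e.symm
      (fun a b hab => hab) _ _ h
    simpa [Function.onFun] using this
  · intro h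
    exact Relation.ReflTransGen.lift e (fun a b hab => by simp [Function.onFun, relabel, hab]) _ _ h

lemma isPhylo_relabel [Finite V] [Finite W] (e : V ≃ W) {adj : V → V → Prop} {root : V}
    (h : IsPhyloNetwork adj root) : IsPhyloNetwork (relabel e adj) (e root) := by
  constructor
  · intro w hw
    rw [show w = e (e.symm w) by simp] at hw
    rw [transGen_relabel] at hw
    exact h.acyclic _ hw
  · intro w
    rw [show w = e (e.symm w) by simp]
    rw [reflTransGen_relabel]
    exact h.connected _
  · rw [indeg_relabel]; exact h.root_indeg
  · rw [outdeg_relabel]; exact h.root_outdeg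
  · intro w hw
    have hw' : e.symm w ≠ root := by
      intro hc; apply hw; rw [← hc]; simp
    have := h.node_types (e.symm w) hw'
    rw [show w = e (e.symm w) by simp, indeg_relabel, outdeg_relabel]
    exact this

lemma isTreeChild_relabel [Finite V] [Finite W] (e : V ≃ W) {adj : V → V → Prop} {root : V}
    (h : IsTreeChildNetwork adj root) : IsTreeChildNetwork (relabel e adj) (e root) := by
  refine ⟨isPhylo_relabel e h.1, ?_⟩
  intro w hw
  have hw' : ¬ IsLeaf adj (e.symm w) := by
    intro hc; apply hw; rw [show w = e (e.symm w) by simp, isLeaf_relabel]; exact hc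
  obtain ⟨u, hu, hur⟩ := h.2 (e.symm w) hw'
  refine ⟨e u, ?_, ?_⟩
  · show adj (e.symm w) (e.symm (e u)); simpa using hu
  · rw [isRetic_relabel]; exact hur

/-! ### Rigidity -/

lemma no_adj_root [Finite V] {adj : V → V → Prop} {root : V}
    (h : indeg adj root = 0) (u : V) : ¬ adj u root := by
  intro hu
  have := Nat.card_eq_zero.mp h
  rcases this with h1 | h1
  · exact h1.elim ⟨u, hu⟩
  · exact @not_finite _ h1 inferInstance

lemma indeg_one_unique [Finite V] {adj : V → V → Prop} {v : V}
    (h : indeg adj v = 1) {a b : V} (ha : adj a v) (hb : adj b v) : a = b := by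
  have := (Nat.card_eq_one_iff_unique.mp h).1
  have : (⟨a, ha⟩ : {u // adj u v}) = ⟨b, hb⟩ := Subsingleton.elim _ _
  exact congrArg Subtype.val this

lemma wf_desc [Finite V] {adj : V → V → Prop} (hac : ∀ v, ¬ Relation.TransGen adj v v) :
    WellFounded (fun b a : V => Relation.TransGen adj a b) := by
  letI : IsTrans V (fun b a : V => Relation.TransGen adj a b) :=
    ⟨fun a b c h1 h2 => h2.trans h1⟩
  letI : IsIrrefl V (fun b a : V => Relation.TransGen adj a b) := ⟨fun a ha => hac a ha⟩
  exact Finite.wellFounded_of_trans_of_irrefl _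

lemma wf_anc [Finite V] {adj : V → V → Prop} (hac : ∀ v, ¬ Relation.TransGen adj v v) :
    WellFounded (fun a b : V => Relation.TransGen adj a b) := by
  letI : IsTrans V (fun a b : V => Relation.TransGen adj a b) :=
    ⟨fun a b c h1 h2 => h1.trans h2⟩
  letI : IsIrrefl V (fun a b : V => Relation.TransGen adj a b) := ⟨fun a ha => hac a ha⟩
  exact Finite.wellFounded_of_trans_of_irrefl _

theorem rigidity [Finite V] {adj : V → V → Prop} {root : V}
    (h : IsTreeChildNetwork adj root) (σ : Equiv.Perm V)
    (hiso : ∀ u v, adj u v ↔ adj (σ u) (σ v))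
    (hleaf : ∀ v, IsLeaf adj v → σ v = v) : ∀ v, σ v = v := by
  intro v
  induction v using (wf_desc h.1.acyclic).induction with
  | _ v IH =>
    by_cases hv : IsLeaf adj v
    · exact hleaf v hv
    · obtain ⟨c, hc, hcr⟩ := h.2 v hv
      have hcfix : σ c = c := IH c (Relation.TransGen.single hc)
      have h2 : adj (σ v) c := by
        have := (hiso v c).mp hc; rwa [hcfix] at this
      have hcroot : c ≠ root := by
        rintro rfl; exact no_adj_root h.1.root_indeg v hc
      have hdeg : indeg adj c = 1 := by
        rcases h.1.node_types c hcroot with h3 | h3 | h3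
        · exact h3.1
        · exact h3.1
        · exact absurd ⟨h3.1, h3.2⟩ hcr
      exact (indeg_one_unique hdeg h2 hc)

end TCaux

namespace TCaux

variable {V : Type}

/-! ### Handshake and degree counts -/

lemma handshake [Fintype V] (adj : V → V → Prop) :
    ∑ v, outdeg adj v = ∑ v, indeg adj v := by
  classical
  have h1 : Nat.card {x : V × V // adj x.1 x.2} = ∑ v, outdeg adj v := by
    rw [Nat.card_congr (Equiv.subtypeProdEquivSigmaSubtype (fun a b => adj a b))]
    rw [Nat.card_eq_fintype_card, Fintype.card_sigma]
    simp only [outdeg, Nat.card_eq_fintype_card]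
  have h2 : Nat.card {x : V × V // adj x.2 x.1} = ∑ v, indeg adj v := by
    rw [Nat.card_congr (Equiv.subtypeProdEquivSigmaSubtype (fun a b => adj b a))]
    rw [Nat.card_eq_fintype_card, Fintype.card_sigma]
    simp only [indeg, Nat.card_eq_fintype_card]
  rw [← h1, ← h2]
  exact Nat.card_congr ((Equiv.prodComm V V).subtypeEquiv (fun x => by simp))

lemma not_leaf_root [Finite V] {adj : V → V → Prop} {root : V}
    (h : IsPhyloNetwork adj root) : ¬ IsLeaf adj root := by
  intro hc; rw [IsLeaf, h.root_indeg] at hc; exact absurd hc.1 (by norm_num)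

lemma not_retic_root [Finite V] {adj : V → V → Prop} {root : V}
    (h : IsPhyloNetwork adj root) : ¬ IsReticulation adj root := by
  intro hc; rw [IsReticulation, h.root_indeg] at hc; exact absurd hc.1 (by norm_num)

lemma not_tree_root [Finite V] {adj : V → V → Prop} {root : V}
    (h : IsPhyloNetwork adj root) : ¬ IsTreeNode adj root := by
  intro hc; rw [IsTreeNode, h.root_indeg] at hc; exact absurd hc.1 (by norm_num)

lemma two_mul_leaf_add_retic [Fintype V] {adj : V → V → Prop} {root : V}
    (h : IsPhyloNetwork adj root) :
    2 * (Nat.card {v // IsLeaf adj v} + Nat.card {v // IsReticulation adj v}) =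
      Fintype.card V := by
  classical
  have excl : ∀ v : V, v ≠ root →
      ((IsLeaf adj v ∧ ¬ IsTreeNode adj v ∧ ¬ IsReticulation adj v) ∨
       (¬ IsLeaf adj v ∧ IsTreeNode adj v ∧ ¬ IsReticulation adj v) ∨
       (¬ IsLeaf adj v ∧ ¬ IsTreeNode adj v ∧ IsReticulation adj v)) := by
    intro v hv
    rcases h.node_types v hv with h3 | h3 | h3
    · exact Or.inl ⟨⟨h3.1, h3.2⟩, fun hc => by rw [IsTreeNode, h3.2] at hc; omega,
        fun hc => by rw [IsReticulation, h3.1] at hc; omega⟩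
    · exact Or.inr (Or.inl ⟨fun hc => by rw [IsLeaf, h3.2] at hc; omega, ⟨h3.1, h3.2⟩,
        fun hc => by rw [IsReticulation, h3.1] at hc; omega⟩)
    · exact Or.inr (Or.inr ⟨fun hc => by rw [IsLeaf, h3.1] at hc; omega,
        fun hc => by rw [IsTreeNode, h3.1] at hc; omega, ⟨h3.1, h3.2⟩⟩)
  have hout : ∀ v : V, outdeg adj v =
      (if v = root then 1 else 0) + (if IsTreeNode adj v then 2 else 0) +
      (if IsReticulation adj v then 1 else 0) := by
    intro v
    by_cases hv : v = root
    · subst hv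
      rw [if_pos rfl, if_neg (not_tree_root h), if_neg (not_retic_root h), h.root_outdeg]
    · rw [if_neg hv]
      rcases excl v hv with ⟨h1, h2, h3⟩ | ⟨h1, h2, h3⟩ | ⟨h1, h2, h3⟩
      · rw [if_neg h2, if_neg h3, h1.2]
      · rw [if_pos h2, if_neg h3, h2.2]
      · rw [if_neg h2, if_pos h3, h3.2]
  have hin : ∀ v : V, indeg adj v =
      (if IsLeaf adj v then 1 else 0) + (if IsTreeNode adj v then 1 else 0) +
      (if IsReticulation adj v then 2 else 0) := by
    intro v
    by_cases hv : v = root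
    · subst hv
      rw [if_neg (not_leaf_root h), if_neg (not_tree_root h), if_neg (not_retic_root h),
        h.root_indeg]
    · rcases excl v hv with ⟨h1, h2, h3⟩ | ⟨h1, h2, h3⟩ | ⟨h1, h2, h3⟩
      · rw [if_pos h1, if_neg h2, if_neg h3, h1.1]
      · rw [if_neg h1, if_pos h2, if_neg h3, h2.1]
      · rw [if_neg h1, if_neg h2, if_pos h3, h3.1]
  have count : ∀ v : V, 1 =
      (if v = root then 1 else 0) + (if IsLeaf adj v then 1 else 0) +
      (if IsTreeNode adj v then 1 else 0) + (if IsReticulation adj v then 1 else 0) := by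
    intro v
    by_cases hv : v = root
    · subst hv
      rw [if_pos rfl, if_neg (not_leaf_root h), if_neg (not_tree_root h),
        if_neg (not_retic_root h)]
    · rw [if_neg hv]
      rcases excl v hv with ⟨h1, h2, h3⟩ | ⟨h1, h2, h3⟩ | ⟨h1, h2, h3⟩
      · rw [if_pos h1, if_neg h2, if_neg h3]
      · rw [if_neg h1, if_pos h2, if_neg h3]
      · rw [if_neg h1, if_neg h2, if_pos h3]
  have sum_ite : ∀ (p : V → Prop) (_ : DecidablePred p) (c : ℕ),
      ∑ v, (if p v then c else 0) = (Finset.univ.filter (fun v => p v)).card * c := by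
    intro p hp c
    rw [← Finset.sum_filter, Finset.sum_const, smul_eq_mul]
  have sum_root : ∑ v, (if v = root then (1:ℕ) else 0) = 1 := by
    rw [sum_ite _ _ 1]
    have : Finset.filter (fun v => v = root) Finset.univ = {root} := by
      ext v; simp
    rw [this, Finset.card_singleton, one_mul]
  have houts : ∑ v, outdeg adj v = 1 + (Finset.univ.filter (fun v => IsTreeNode adj v)).card * 2 + (Finset.univ.filter (fun v => IsReticulation adj v)).card * 1 := by
    calc ∑ v, outdeg adj v = ∑ v, ((if v = root then 1 else 0) +
        (if IsTreeNode adj v then 2 else 0) + (if IsReticulation adj v then 1 else 0)) :=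
          Finset.sum_congr rfl (fun v _ => hout v)
      _ = _ := by rw [Finset.sum_add_distrib, Finset.sum_add_distrib, sum_root,
            sum_ite _ _ 2, sum_ite _ _ 1]
  have hins : ∑ v, indeg adj v = (Finset.univ.filter (fun v => IsLeaf adj v)).card * 1 + (Finset.univ.filter (fun v => IsTreeNode adj v)).card * 1 + (Finset.univ.filter (fun v => IsReticulation adj v)).card * 2 := by
    calc ∑ v, indeg adj v = ∑ v, ((if IsLeaf adj v then 1 else 0) +
        (if IsTreeNode adj v then 1 else 0) + (if IsReticulation adj v then 2 else 0)) :=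
          Finset.sum_congr rfl (fun v _ => hin v)
      _ = _ := by rw [Finset.sum_add_distrib, Finset.sum_add_distrib,
            sum_ite _ _ 1, sum_ite _ _ 1, sum_ite _ _ 2]
  have hcard : Fintype.card V = 1 + (Finset.univ.filter (fun v => IsLeaf adj v)).card + (Finset.univ.filter (fun v => IsTreeNode adj v)).card + (Finset.univ.filter (fun v => IsReticulation adj v)).card := by
    calc Fintype.card V = ∑ _v : V, 1 := by simp
      _ = ∑ v, ((if v = root then 1 else 0) + (if IsLeaf adj v then 1 else 0) +
          (if IsTreeNode adj v then 1 else 0) + (if IsReticulation adj v then 1 else 0)) :=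
          Finset.sum_congr rfl (fun v _ => count v)
      _ = _ := by rw [Finset.sum_add_distrib, Finset.sum_add_distrib,
            Finset.sum_add_distrib, sum_root, sum_ite _ _ 1, sum_ite _ _ 1, sum_ite _ _ 1]; omega
  have key := handshake adj
  rw [houts, hins] at key
  have hLcard : Nat.card {v // IsLeaf adj v} = (Finset.univ.filter (fun v => IsLeaf adj v)).card := by
    rw [Nat.card_eq_fintype_card, Fintype.card_subtype]
  have hRcard : Nat.card {v // IsReticulation adj v} = (Finset.univ.filter (fun v => IsReticulation adj v)).card := by
    rw [Nat.card_eq_fintype_card, Fintype.card_subtype]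
  rw [hLcard, hRcard, hcard]
  omega

end TCaux
namespace TCaux

variable {V : Type}

/-! ### Tree paths and the bound #retic + 1 ≤ #leaves -/

section TP
attribute [local instance] Classical.propDecidable
variable [Finite V] {adj : V → V → Prop} {root : V}

noncomputable def ch (h : IsTreeChildNetwork adj root) (v : V) : V :=
  if hv : IsLeaf adj v then v else Classical.choose (h.2 v hv)

lemma ch_spec (h : IsTreeChildNetwork adj root) {v : V} (hv : ¬ IsLeaf adj v) :
    adj v (ch h v) ∧ ¬ IsReticulation adj (ch h v) := by
  unfold ch; rw [dif_neg hv]; exact Classical.choose_spec (h.2 v hv)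

/-- One step of the canonical tree path. -/
def StepR (h : IsTreeChildNetwork adj root) (a b : V) : Prop :=
  ¬ IsLeaf adj a ∧ b = ch h a

noncomputable def tp (h : IsTreeChildNetwork adj root) : V → V :=
  (wf_desc h.1.acyclic).fix (fun v rec =>
    if hv : IsLeaf adj v then v
    else rec (ch h v) (Relation.TransGen.single (ch_spec h hv).1))

lemma tp_eq (h : IsTreeChildNetwork adj root) (v : V) :
    tp h v = if hv : IsLeaf adj v then v else tp h (ch h v) := by
  unfold tp
  rw [WellFounded.fix_eq]

lemma tp_isLeaf (h : IsTreeChildNetwork adj root) (v : V) : IsLeaf adj (tp h v) := by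
  induction v using (wf_desc h.1.acyclic).induction with
  | _ v IH =>
    rw [tp_eq]
    by_cases hv : IsLeaf adj v
    · rw [dif_pos hv]; exact hv
    · rw [dif_neg hv]; exact IH _ (Relation.TransGen.single (ch_spec h hv).1)

lemma tp_reach (h : IsTreeChildNetwork adj root) (v : V) :
    Relation.ReflTransGen (StepR h) v (tp h v) := by
  induction v using (wf_desc h.1.acyclic).induction with
  | _ v IH =>
    rw [tp_eq]
    by_cases hv : IsLeaf adj v
    · rw [dif_pos hv]
    · rw [dif_neg hv]
      exact Relation.ReflTransGen.head ⟨hv, rfl⟩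
        (IH _ (Relation.TransGen.single (ch_spec h hv).1))

/-- Every vertex on a tree path, other than the start, is a non-reticulation non-root. -/
lemma reach_mid (h : IsTreeChildNetwork adj root) {a b : V}
    (hr : Relation.ReflTransGen (StepR h) a b) :
    a = b ∨ (¬ IsReticulation adj b ∧ b ≠ root) := by
  induction hr with
  | refl => exact Or.inl rfl
  | tail hr' hstep IH =>
    right
    obtain ⟨hc, hd⟩ := hstep
    subst hd
    have := ch_spec h hc
    exact ⟨this.2, fun hr => no_adj_root h.1.root_indeg _ (hr ▸ this.1)⟩

/-- Special vertices (root or reticulations) with tree paths to a common vertex coincide. -/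
lemma special_reach_unique (h : IsTreeChildNetwork adj root) :
    ∀ x a b : V, (a = root ∨ IsReticulation adj a) → (b = root ∨ IsReticulation adj b) →
      Relation.ReflTransGen (StepR h) a x → Relation.ReflTransGen (StepR h) b x →
      a = b := by
  intro x
  induction x using (wf_anc h.1.acyclic).induction with
  | _ x IH =>
    intro a b ha hb hra hrb
    by_cases hax : a = x
    · subst hax
      rcases reach_mid h hrb with h1 | h1
      · exact h1.symm
      · rcases ha with h2 | h2
        · exact absurd h2 h1.2
        · exact absurd h2 h1.1
    · by_cases hbx : b = x
      · subst hbx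
        rcases reach_mid h hra with h1 | h1
        · exact h1
        · rcases hb with h2 | h2
          · exact absurd h2 h1.2
          · exact absurd h2 h1.1
      · -- both paths have length ≥ 1; last steps enter x
        rcases hra.cases_tail with h1 | ⟨ya, hya, hsa⟩
        · exact absurd h1.symm hax
        rcases hrb.cases_tail with h1 | ⟨yb, hyb, hsb⟩
        · exact absurd h1.symm hbx
        have hadja : adj ya x := hsa.2 ▸ (ch_spec h hsa.1).1
        have hadjb : adj yb x := hsb.2 ▸ (ch_spec h hsb.1).1
        have hxroot : x ≠ root := fun hr => no_adj_root h.1.root_indeg ya (hr ▸ hadja)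
        have hxretic : ¬ IsReticulation adj x := by
          rcases reach_mid h hra with h1 | h1
          · exact absurd h1 hax
          · exact h1.1
        have hdeg : indeg adj x = 1 := by
          rcases h.1.node_types x hxroot with h3 | h3 | h3
          · exact h3.1
          · exact h3.1
          · exact absurd ⟨h3.1, h3.2⟩ hxretic
        have hy : ya = yb := indeg_one_unique hdeg hadja hadjb
        subst hy
        exact IH ya (Relation.TransGen.single hadja) a b ha hb hya hyb

lemma card_special (h : IsTreeChildNetwork adj root) :
    Nat.card {v // v = root ∨ IsReticulation adj v} =
      1 + Nat.card {v // IsReticulation adj v} := by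
  classical
  have e : {v // v = root ∨ IsReticulation adj v} ≃
      ({v // v = root} ⊕ {v // IsReticulation adj v}) := by
    refine ⟨fun x => if hx : x.1 = root then Sum.inl ⟨x.1, hx⟩ else
        Sum.inr ⟨x.1, x.2.resolve_left hx⟩,
      fun y => y.elim (fun a => ⟨a.1, Or.inl a.2⟩) (fun a => ⟨a.1, Or.inr a.2⟩), ?_, ?_⟩
    · intro x
      by_cases hx : x.1 = root
      · simp only [hx, dif_pos]
        exact Subtype.ext hx.symm
      · simp [hx]
    · intro y
      rcases y with a | a
      · simp only [Sum.elim_inl, a.2, dif_pos]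
        congr 1
        exact Subtype.ext a.2.symm
      · have : a.1 ≠ root := fun hr => not_retic_root h.1 (hr ▸ a.2)
        simp [this, a.2]
  rw [Nat.card_congr e, Nat.card_sum]
  congr 1
  letI := Fintype.ofFinite V
  rw [Nat.card_eq_fintype_card, Fintype.card_subtype_eq]

theorem retic_lt_leaf (h : IsTreeChildNetwork adj root) :
    1 + Nat.card {v // IsReticulation adj v} ≤ Nat.card {v // IsLeaf adj v} := by
  rw [← card_special h]
  refine Nat.card_le_card_of_injective
    (fun x => (⟨tp h x.1, tp_isLeaf h x.1⟩ : {v // IsLeaf adj v})) ?_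
  rintro ⟨a, ha⟩ ⟨b, hb⟩ hab
  have : tp h a = tp h b := congrArg Subtype.val hab
  have := special_reach_unique h (tp h a) a b ha hb (tp_reach h a) (this ▸ tp_reach h b)
  exact Subtype.ext this

end TP
end TCaux
namespace TCaux

attribute [local instance] Classical.propDecidable

/-! ### Counting permutations and bijections -/

noncomputable def splitEquiv {α β : Type} (p : α → Prop) (q : β → Prop) :
    {f : α ≃ β // ∀ v, q (f v) ↔ p v} ≃
      (({x // p x} ≃ {y // q y}) × ({x // ¬ p x} ≃ {y // ¬ q y})) where
  toFun f := (f.1.subtypeEquiv (fun a => (f.2 a).symm),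
              f.1.subtypeEquiv (fun a => not_congr (f.2 a).symm))
  invFun e := ⟨(Equiv.sumCompl p).symm.trans ((e.1.sumCongr e.2).trans (Equiv.sumCompl q)), by
    intro v
    by_cases hv : p v
    · simp [Equiv.sumCompl_symm_apply_of_pos hv, (e.1 ⟨v, hv⟩).2, hv]
    · simp [Equiv.sumCompl_symm_apply_of_neg hv, (e.2 ⟨v, hv⟩).2, hv]⟩
  left_inv f := by
    apply Subtype.ext
    apply Equiv.ext
    intro v
    by_cases hv : p v
    · simp [Equiv.sumCompl_symm_apply_of_pos hv]
    · simp [Equiv.sumCompl_symm_apply_of_neg hv]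
  right_inv e := by
    apply Prod.ext
    · apply Equiv.ext
      intro x
      apply Subtype.ext
      simp [Equiv.sumCompl_symm_apply_of_pos x.2]
    · apply Equiv.ext
      intro x
      apply Subtype.ext
      simp [Equiv.sumCompl_symm_apply_of_neg x.2]

lemma card_equiv' {α β : Type} [Finite α] [Finite β] (h : Nat.card α = Nat.card β) :
    Nat.card (α ≃ β) = (Nat.card α).factorial := by
  letI := Fintype.ofFinite α; letI := Fintype.ofFinite β
  simp only [Nat.card_eq_fintype_card] at h ⊢
  obtain ⟨e⟩ := Fintype.card_eq.mp h
  rw [Fintype.card_equiv e]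

lemma card_fix_equiv {α β : Type} [Finite α] [Finite β] (a₀ : α) (b₀ : β)
    (h : Nat.card α = Nat.card β) :
    Nat.card {f : α ≃ β // f a₀ = b₀} = (Nat.card α - 1).factorial := by
  letI := Fintype.ofFinite α; letI := Fintype.ofFinite β
  have e0 : {f : α ≃ β // f a₀ = b₀} ≃ {f : α ≃ β // ∀ v, f v = b₀ ↔ v = a₀} :=
    Equiv.subtypeEquivRight (fun f =>
      ⟨fun hf v => ⟨fun hv => f.injective (hv.trans hf.symm), fun hv => hv ▸ hf⟩,
       fun hf => (hf a₀).mpr rfl⟩)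
  rw [Nat.card_congr (e0.trans (splitEquiv (fun v => v = a₀) (fun w => w = b₀))),
    Nat.card_prod]
  have hc1 : Nat.card {x : α // x = a₀} = 1 := by
    rw [Nat.card_eq_fintype_card, Fintype.card_subtype_eq]
  have hc1' : Nat.card {y : β // y = b₀} = 1 := by
    rw [Nat.card_eq_fintype_card, Fintype.card_subtype_eq]
  have hc2 : Nat.card {x : α // ¬ x = a₀} = Nat.card α - 1 := by
    rw [Nat.card_eq_fintype_card, Fintype.card_subtype_compl, Fintype.card_subtype_eq,
      Nat.card_eq_fintype_card]
  have hc2' : Nat.card {y : β // ¬ y = b₀} = Nat.card β - 1 := by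
    rw [Nat.card_eq_fintype_card, Fintype.card_subtype_compl, Fintype.card_subtype_eq,
      Nat.card_eq_fintype_card]
  rw [card_equiv' (by rw [hc1, hc1']), card_equiv' (by rw [hc2, hc2', h]), hc1, hc2]
  norm_num

lemma card_perm_pointwise {α : Type} [Finite α] (p : α → Prop) :
    Nat.card {σ : Equiv.Perm α // ∀ a, p a → σ a = a} =
      (Nat.card {x // ¬ p x}).factorial := by
  letI := Fintype.ofFinite α
  have e1 : {σ : Equiv.Perm α // ∀ a, p a → σ a = a} ≃
      {σ : Equiv.Perm α // ∀ a, ¬ ¬ p a → σ a = a} :=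
    Equiv.subtypeEquivRight (fun σ => by
      constructor
      · intro hσ a ha; exact hσ a (not_not.mp ha)
      · intro hσ a ha; exact hσ a (not_not.mpr ha))
  rw [Nat.card_congr (e1.trans (Equiv.Perm.subtypeEquivSubtypePerm (fun a => ¬ p a)).symm)]
  rw [Nat.card_eq_fintype_card, Fintype.card_perm, Nat.card_eq_fintype_card]

def prodSubtypeSnd {A B : Type} (R : B → Prop) : {x : A × B // R x.2} ≃ A × {b // R b} :=
  ⟨fun x => (x.1.1, ⟨x.1.2, x.2⟩), fun y => ⟨(y.1, y.2.1), y.2.2⟩,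
   fun x => rfl, fun y => rfl⟩

lemma card_perm_mapsto {α : Type} [Finite α] (p q : α → Prop) (a₀ : α)
    (hpa : ¬ p a₀) (hqa : ¬ q a₀) (h : Nat.card {x // p x} = Nat.card {x // q x}) :
    Nat.card {σ : Equiv.Perm α // σ a₀ = a₀ ∧ ∀ v, q (σ v) ↔ p v} =
      (Nat.card {x // p x}).factorial *
        (Nat.card α - Nat.card {x // p x} - 1).factorial := by
  letI := Fintype.ofFinite α
  have e1 : {σ : Equiv.Perm α // σ a₀ = a₀ ∧ ∀ v, q (σ v) ↔ p v} ≃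
      {t : {σ : Equiv.Perm α // ∀ v, q (σ v) ↔ p v} // t.1 a₀ = a₀} := by
    refine (Equiv.subtypeEquivRight (fun σ => and_comm)).trans ?_
    exact (Equiv.subtypeSubtypeEquivSubtypeInter
      (fun σ : Equiv.Perm α => ∀ v, q (σ v) ↔ p v) (fun σ => σ a₀ = a₀)).symm
  have e3 : {t : {σ : Equiv.Perm α // ∀ v, q (σ v) ↔ p v} // t.1 a₀ = a₀} ≃
      {x : (({x // p x} ≃ {y // q y}) × ({x // ¬ p x} ≃ {y // ¬ q y})) //
        x.2 ⟨a₀, hpa⟩ = ⟨a₀, hqa⟩} := by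
    refine (splitEquiv p q).subtypeEquiv (fun t => ?_)
    rw [Subtype.ext_iff]
    simp [splitEquiv]
  rw [Nat.card_congr ((e1.trans e3).trans
    (prodSubtypeSnd (fun (y : {x // ¬ p x} ≃ {y // ¬ q y}) => y ⟨a₀, hpa⟩ = ⟨a₀, hqa⟩))),
    Nat.card_prod]
  have hcompl : Nat.card {x : α // ¬ p x} = Nat.card α - Nat.card {x // p x} := by
    rw [Nat.card_eq_fintype_card, Fintype.card_subtype_compl, Nat.card_eq_fintype_card,
      Nat.card_eq_fintype_card]
  have hcompl' : Nat.card {x : α // ¬ q x} = Nat.card α - Nat.card {x // q x} := by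
    rw [Nat.card_eq_fintype_card, Fintype.card_subtype_compl, Nat.card_eq_fintype_card,
      Nat.card_eq_fintype_card]
  rw [card_equiv' h, card_fix_equiv _ _ (by rw [hcompl, hcompl', h]), hcompl]

lemma card_val_interval (M a b : ℕ) (hb : b ≤ M) :
    Nat.card {v : Fin M // a ≤ v.val ∧ v.val < b} = b - a := by
  have e : {v : Fin M // a ≤ v.val ∧ v.val < b} ≃ Fin (b - a) :=
    ⟨fun v => ⟨v.1.val - a, by have := v.2; omega⟩,
     fun j => ⟨⟨j.1 + a, by have := j.2; omega⟩, by
        show a ≤ j.1 + a ∧ j.1 + a < b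
        have := j.2; omega⟩,
     fun v => by
        apply Subtype.ext; apply Fin.ext
        show v.1.val - a + a = v.1.val
        have := v.2; omega,
     fun j => by
        apply Fin.ext
        show j.1 + a - a = j.1
        omega⟩
  rw [Nat.card_congr e, Nat.card_eq_fintype_card, Fintype.card_fin]

end TCaux
namespace TCaux

attribute [local instance] Classical.propDecidable

/-! ### The core count -/

instance instFiniteRep (n k : ℕ) : Finite (LeafLabeledTCRep n k) := by
  unfold LeafLabeledTCRep; exact Subtype.finite

section Core

variable (n k : ℕ)

def TCnet : Type := {adj : Fin (2 * (n + k)) → Fin (2 * (n + k)) → Prop //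
  ∃ h : 0 < 2 * (n + k), IsTreeChildNetwork adj ⟨0, h⟩}

instance instFiniteTCnet (n k : ℕ) : Finite (TCnet n k) := by
  unfold TCnet; exact Subtype.finite

def Fn : Type := {A : TCnet n k // Nat.card {v // IsLeaf A.1 v} = n}

instance instFiniteFn (n k : ℕ) : Finite (Fn n k) := by
  unfold Fn; exact Subtype.finite

def rt (hpos : 0 < n + k) : Fin (2 * (n + k)) := ⟨0, by omega⟩

def Gt (hpos : 0 < n + k) : Type := {σ : Equiv.Perm (Fin (2 * (n + k))) // σ (rt n k hpos) = rt n k hpos}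

instance instFiniteGt (n k : ℕ) (hpos : 0 < n + k) : Finite (Gt n k hpos) := by
  unfold Gt; exact Subtype.finite

lemma tc_rep (hpos : 0 < n + k) (A : LeafLabeledTCRep n k) :
    IsTreeChildNetwork A.1 (rt n k hpos) := by
  obtain ⟨h0, htc, hlf⟩ := A.2
  exact htc

lemma leaf_iff_rep (A : LeafLabeledTCRep n k) (v : Fin (2 * (n + k))) :
    IsLeaf A.1 v ↔ (1 ≤ v.val ∧ v.val ≤ n) := by
  obtain ⟨h0, htc, hlf⟩ := A.2
  exact hlf v

lemma card_leaf_relabel {V W : Type} (e : V ≃ W) (adj : V → V → Prop) :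
    Nat.card {v // IsLeaf (relabel e adj) v} = Nat.card {v // IsLeaf adj v} :=
  (Nat.card_congr (e.subtypeEquiv (fun u => (isLeaf_relabel e adj u).symm))).symm

lemma card_leaf_rep (hpos : 0 < n + k) (A : LeafLabeledTCRep n k) :
    Nat.card {v // IsLeaf A.1 v} = n := by
  have e1 : {v // IsLeaf A.1 v} ≃ {v : Fin (2 * (n + k)) // 1 ≤ v.val ∧ v.val < n + 1} :=
    Equiv.subtypeEquivRight (fun v => by rw [leaf_iff_rep n k A v]; omega)
  rw [Nat.card_congr e1, card_val_interval _ _ _ (by omega)]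
  omega

lemma lowfix {M m : ℕ} (σ : Equiv.Perm (Fin M)) (hσ : ∀ v : Fin M, v.val ≤ m → σ v = v) :
    (∀ v : Fin M, v.val ≤ m → σ.symm v = v) ∧
    (∀ v : Fin M, (σ.symm v).val ≤ m ↔ v.val ≤ m) := by
  have h1 : ∀ v : Fin M, v.val ≤ m → σ.symm v = v := by
    intro v hv
    apply σ.injective
    rw [Equiv.apply_symm_apply, hσ v hv]
  refine ⟨h1, fun v => ⟨fun hv => ?_, fun hv => by rw [h1 v hv]; exact hv⟩⟩
  have := hσ _ hv
  rw [Equiv.apply_symm_apply] at this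
  rw [this]
  exact hv

lemma iso_equivalence : Equivalence (LeafLabeledIso n k) := by
  constructor
  · intro A
    exact ⟨Equiv.refl _, fun v _ => rfl, fun u v => Iff.rfl⟩
  · rintro A B ⟨σ, hfix, hrel⟩
    refine ⟨σ.symm, (lowfix σ hfix).1, fun u v => ?_⟩
    have := hrel (σ.symm u) (σ.symm v)
    simp only [Equiv.apply_symm_apply] at this
    exact this.symm
  · rintro A B C ⟨σ, hfix, hrel⟩ ⟨τ, hfix', hrel'⟩
    refine ⟨σ.trans τ, fun v hv => ?_, fun u v => ?_⟩
    · show τ (σ v) = v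
      rw [hfix v hv, hfix' v hv]
    · exact (hrel u v).trans (hrel' (σ u) (σ v))

lemma card_class (hpos : 0 < n + k) (A₀ : LeafLabeledTCRep n k) :
    Nat.card {B : LeafLabeledTCRep n k // LeafLabeledIso n k A₀ B} =
      Nat.card {σ : Equiv.Perm (Fin (2 * (n + k))) //
        ∀ v : Fin (2 * (n + k)), v.val ≤ n → σ v = v} := by
  have h0 : (0:ℕ) < 2 * (n + k) := by omega
  have htc := tc_rep n k hpos A₀
  have hlf := leaf_iff_rep n k A₀
  refine (Nat.card_congr (Equiv.ofBijective
    (fun σ : {σ : Equiv.Perm (Fin (2 * (n + k))) // ∀ v, v.val ≤ n → σ v = v} =>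
      (⟨⟨relabel σ.1 A₀.1, h0, by
        -- tree-child property
        have hroot : σ.1 (rt n k hpos) = rt n k hpos := σ.2 (rt n k hpos) (Nat.zero_le n)
        have := isTreeChild_relabel σ.1 htc
        rwa [hroot] at this, by
        -- leaf labels
        intro v
        have hsf := (lowfix σ.1 σ.2).1
        have hsv := (lowfix σ.1 σ.2).2
        have h1 : IsLeaf (relabel σ.1 A₀.1) v ↔ IsLeaf A₀.1 (σ.1.symm v) := by
          conv_lhs => rw [show v = σ.1 (σ.1.symm v) by simp]
          exact isLeaf_relabel _ _ _
        rw [h1, hlf]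
        constructor
        · rintro ⟨ha, hb⟩
          have heq := hsf v ((hsv v).mp hb)
          rw [heq] at ha hb
          exact ⟨ha, hb⟩
        · rintro ⟨ha, hb⟩
          rw [hsf v hb]
          exact ⟨ha, hb⟩⟩,
       σ.1, σ.2, fun u v => by simp [relabel]⟩ :
        {B : LeafLabeledTCRep n k // LeafLabeledIso n k A₀ B}))
    ⟨by
      -- injective
      rintro ⟨σ, hσ⟩ ⟨τ, hτ⟩ hst
      have heq : relabel σ A₀.1 = relabel τ A₀.1 :=
        congrArg (fun z => z.1.1) hst
      have hiso : ∀ u v, A₀.1 u v ↔ A₀.1 (σ.symm (τ u)) (σ.symm (τ v)) := by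
        intro u v
        have h2 : A₀.1 (σ.symm (τ u)) (σ.symm (τ v)) ↔ A₀.1 (τ.symm (τ u)) (τ.symm (τ v)) :=
          iff_of_eq (congrFun (congrFun heq (τ u)) (τ v))
        simp only [Equiv.symm_apply_apply] at h2
        exact h2.symm
      have hleaf : ∀ v, IsLeaf A₀.1 v → (τ.trans σ.symm) v = v := by
        intro v hv
        have hvn : v.val ≤ n := ((hlf v).mp hv).2
        show σ.symm (τ v) = v
        rw [hτ v hvn, (lowfix σ hσ).1 v hvn]
      have hall := rigidity htc (τ.trans σ.symm) hiso hleaf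
      apply Subtype.ext
      apply Equiv.ext
      intro v
      have hv : σ.symm (τ v) = v := hall v
      have hv2 := congrArg σ hv
      rw [Equiv.apply_symm_apply] at hv2
      exact hv2.symm, by
      -- surjective
      rintro ⟨B, σ, hfix, hrel⟩
      refine ⟨⟨σ, hfix⟩, ?_⟩
      apply Subtype.ext
      apply Subtype.ext
      show relabel σ A₀.1 = B.1
      funext u v
      apply propext
      have := hrel (σ.symm u) (σ.symm v)
      simp only [Equiv.apply_symm_apply] at this
      exact this⟩)).symm

lemma card_not_le (m : ℕ) (hm : m + 1 ≤ 2 * (n + k)) :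
    Nat.card {v : Fin (2 * (n + k)) // ¬ v.val ≤ m} = 2 * (n + k) - 1 - m := by
  have e : {v : Fin (2 * (n + k)) // ¬ v.val ≤ m} ≃
      {v : Fin (2 * (n + k)) // m + 1 ≤ v.val ∧ v.val < 2 * (n + k)} :=
    Equiv.subtypeEquivRight (fun v => by
      have := v.isLt; omega)
  rw [Nat.card_congr e, card_val_interval _ _ _ (le_refl _)]
  omega

lemma card_eq_sum_fibers {X Y : Type} [Finite X] [Fintype Y] (f : X → Y) :
    Nat.card X = ∑ y : Y, Nat.card {x // f x = y} := by
  rw [← Nat.card_congr (Equiv.sigmaFiberEquiv f)]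
  letI := Fintype.ofFinite X
  letI : ∀ y : Y, Fintype {x // f x = y} := fun y => Fintype.ofFinite _
  rw [Nat.card_eq_fintype_card, Fintype.card_sigma]
  exact Finset.sum_congr rfl (fun y _ => by rw [Nat.card_eq_fintype_card])

lemma card_rep (hpos : 0 < n + k) : Nat.card (LeafLabeledTCRep n k) =
    TCcount n k * (2 * (n + k) - 1 - n).factorial := by
  letI : Fintype (Quot (LeafLabeledIso n k)) := Fintype.ofFinite _
  rw [card_eq_sum_fibers (Quot.mk (LeafLabeledIso n k))]
  have hterm : ∀ q : Quot (LeafLabeledIso n k),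
      Nat.card {A // Quot.mk (LeafLabeledIso n k) A = q} =
        (2 * (n + k) - 1 - n).factorial := by
    intro q
    obtain ⟨A₀, rfl⟩ := Quot.exists_rep q
    have e1 : {A // Quot.mk (LeafLabeledIso n k) A = Quot.mk (LeafLabeledIso n k) A₀} ≃
        {B // LeafLabeledIso n k A₀ B} :=
      Equiv.subtypeEquivRight (fun A => by
        rw [Quot.eq, Equivalence.eqvGen_iff (iso_equivalence n k)]
        exact ⟨(iso_equivalence n k).symm, (iso_equivalence n k).symm⟩)
    rw [Nat.card_congr e1, card_class n k hpos A₀,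
      card_perm_pointwise (fun v : Fin (2 * (n + k)) => v.val ≤ n)]
    congr 1
    exact card_not_le n k n (by omega)
  rw [Finset.sum_congr rfl (fun q _ => hterm q), Finset.sum_const, smul_eq_mul,
    Finset.card_univ, TCcount, Nat.card_eq_fintype_card]

noncomputable def Psi (hpos : 0 < n + k) : LeafLabeledTCRep n k × Gt n k hpos → Fn n k := fun x =>
  ⟨⟨relabel x.2.1 x.1.1, ⟨by omega, by
      have := isTreeChild_relabel x.2.1 (tc_rep n k hpos x.1)
      rwa [x.2.2] at this⟩⟩, by
    rw [card_leaf_relabel]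
    exact card_leaf_rep n k hpos x.1⟩

lemma card_psi_fiber (hpos : 0 < n + k) (B : Fn n k) :
    Nat.card {x : LeafLabeledTCRep n k × Gt n k hpos // Psi n k hpos x = B} =
      n.factorial * (2 * (n + k) - n - 1).factorial := by
  have e : {x : LeafLabeledTCRep n k × Gt n k hpos // Psi n k hpos x = B} ≃
      {σ : Equiv.Perm (Fin (2 * (n + k))) // σ (rt n k hpos) = rt n k hpos ∧
        ∀ v, IsLeaf B.1.1 (σ v) ↔ (1 ≤ v.val ∧ v.val ≤ n)} := by
    refine ⟨fun x => ⟨x.1.2.1, x.1.2.2, fun v => ?_⟩, fun σ => ⟨(⟨⟨relabel σ.1.symm B.1.1,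
        ?_⟩, ⟨σ.1, σ.2.1⟩⟩ : LeafLabeledTCRep n k × Gt n k hpos), ?_⟩, ?_, ?_⟩
    · -- leaf condition for toFun
      obtain ⟨⟨A, σ0⟩, hx⟩ := x
      have hB : B.1.1 = relabel σ0.1 A.1 := (congrArg (fun z => z.1.1) hx).symm
      show IsLeaf B.1.1 (σ0.1 v) ↔ _
      rw [hB]
      have h1 : IsLeaf (relabel σ0.1 A.1) (σ0.1 v) ↔ IsLeaf A.1 v := isLeaf_relabel _ _ _
      rw [h1, leaf_iff_rep]
    · -- rep property of invFun
      refine ⟨by omega, ?_, ?_⟩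
      · have hsym : σ.1.symm (rt n k hpos) = rt n k hpos := by
          apply σ.1.injective
          rw [Equiv.apply_symm_apply, σ.2.1]
        obtain ⟨h0, htcB⟩ := B.1.2
        have := isTreeChild_relabel σ.1.symm htcB
        rwa [show σ.1.symm ⟨0, h0⟩ = ⟨0, h0⟩ from hsym] at this
      · intro v
        have h1 : IsLeaf (relabel σ.1.symm B.1.1) v ↔ IsLeaf B.1.1 (σ.1 v) := by
          conv_lhs => rw [show v = σ.1.symm (σ.1 v) by simp]
          exact isLeaf_relabel _ _ _
        rw [h1]
        exact σ.2.2 v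
    · -- Psi invFun = B
      apply Subtype.ext
      apply Subtype.ext
      show relabel σ.1 (relabel σ.1.symm B.1.1) = B.1.1
      exact relabel_relabel' σ.1 B.1.1
    · -- left inverse
      rintro ⟨⟨A, σ0⟩, hx⟩
      apply Subtype.ext
      apply Prod.ext
      · apply Subtype.ext
        show relabel σ0.1.symm B.1.1 = A.1
        have hB : B.1.1 = relabel σ0.1 A.1 := (congrArg (fun z => z.1.1) hx).symm
        rw [hB, relabel_relabel]
      · apply Subtype.ext
        rfl
    · -- right inverse
      intro σ
      apply Subtype.ext
      rfl
  rw [Nat.card_congr e]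
  have hpa : ¬ (1 ≤ (rt n k hpos).val ∧ (rt n k hpos).val ≤ n) := by
    simp [rt]
  have hqa : ¬ IsLeaf B.1.1 (rt n k hpos) := by
    obtain ⟨h0, htcB⟩ := B.1.2
    exact not_leaf_root htcB.1
  have hcard_p : Nat.card {x : Fin (2 * (n + k)) // 1 ≤ x.val ∧ x.val ≤ n} = n := by
    have e2 : {x : Fin (2 * (n + k)) // 1 ≤ x.val ∧ x.val ≤ n} ≃
        {v : Fin (2 * (n + k)) // 1 ≤ v.val ∧ v.val < n + 1} :=
      Equiv.subtypeEquivRight (fun v => by omega)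
    rw [Nat.card_congr e2, card_val_interval _ _ _ (by omega)]
    omega
  have hcard_q : Nat.card {x // IsLeaf B.1.1 x} = n := B.2
  have key := card_perm_mapsto (fun w : Fin (2 * (n + k)) => 1 ≤ w.val ∧ w.val ≤ n)
    (fun w : Fin (2 * (n + k)) => IsLeaf B.1.1 w) (rt n k hpos) hpa hqa
    (hcard_p.trans hcard_q.symm)
  rw [hcard_p, Nat.card_eq_fintype_card (α := Fin (2 * (n + k))), Fintype.card_fin] at key
  exact key

theorem core (hpos : 0 < n + k) : Nat.card (Fn n k) =
    ((2 * (n + k) - 1).factorial / n.factorial) * TCcount n k := by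
  letI : Fintype (Fn n k) := Fintype.ofFinite _
  have hG : Nat.card (Gt n k hpos) = (2 * (n + k) - 1).factorial := by
    have := card_fix_equiv (α := Fin (2 * (n + k))) (β := Fin (2 * (n + k)))
      (rt n k hpos) (rt n k hpos) rfl
    rw [Nat.card_eq_fintype_card (α := Fin (2 * (n + k))), Fintype.card_fin] at this
    exact this
  have h1 : Nat.card (LeafLabeledTCRep n k × Gt n k hpos) =
      TCcount n k * (2 * (n + k) - 1 - n).factorial * (2 * (n + k) - 1).factorial := by
    rw [Nat.card_prod, hG, card_rep n k hpos]
  have h2 := card_eq_sum_fibers (Psi n k hpos)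
  rw [Finset.sum_congr rfl (fun B _ => card_psi_fiber n k hpos B), Finset.sum_const,
    smul_eq_mul, Finset.card_univ] at h2
  rw [h2] at h1
  have hMn : 2 * (n + k) - n - 1 = 2 * (n + k) - 1 - n := by omega
  rw [hMn] at h1
  have hkey : Fintype.card (Fn n k) * n.factorial =
      TCcount n k * (2 * (n + k) - 1).factorial := by
    apply Nat.eq_of_mul_eq_mul_right (Nat.factorial_pos (2 * (n + k) - 1 - n))
    calc Fintype.card (Fn n k) * n.factorial * (2 * (n + k) - 1 - n).factorial
        = Fintype.card (Fn n k) * (n.factorial * (2 * (n + k) - 1 - n).factorial) := by ring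
      _ = TCcount n k * (2 * (n + k) - 1 - n).factorial * (2 * (n + k) - 1).factorial :=
          h1
      _ = TCcount n k * (2 * (n + k) - 1).factorial * (2 * (n + k) - 1 - n).factorial := by
          ring
  rw [Nat.card_eq_fintype_card]
  apply Nat.eq_of_mul_eq_mul_right (Nat.factorial_pos n)
  rw [hkey]
  have hdvd : n.factorial ∣ (2 * (n + k) - 1).factorial :=
    Nat.factorial_dvd_factorial (by omega)
  calc TCcount n k * (2 * (n + k) - 1).factorial
      = TCcount n k * ((2 * (n + k) - 1).factorial / n.factorial * n.factorial) := by
        rw [Nat.div_mul_cancel hdvd]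
    _ = (2 * (n + k) - 1).factorial / n.factorial * TCcount n k * n.factorial := by ring

end Core
end TCaux

namespace TCaux

attribute [local instance] Classical.propDecidable

instance instFiniteNode (N : ℕ) : Finite (NodeLabeledTC N) := by
  unfold NodeLabeledTC; exact Subtype.finite

lemma card_eq_sum_fibers_finset {X : Type} [Finite X] (f : X → ℕ) (s : Finset ℕ)
    (h : ∀ x, f x ∈ s) : Nat.card X = ∑ i ∈ s, Nat.card {x // f x = i} := by
  letI := Fintype.ofFinite X
  rw [Nat.card_eq_fintype_card, ← Finset.card_univ,
    Finset.card_eq_sum_card_fiberwise (fun x _ => h x)]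
  exact Finset.sum_congr rfl (fun i _ => by
    rw [Nat.card_eq_fintype_card, Fintype.card_subtype])

lemma leafcount_mem (N : ℕ) (hN : N % 2 = 1) (A : NodeLabeledTC N) :
    Nat.card {v // IsLeaf A.1 v} ∈ Finset.Icc ((N + 6) / 4) ((N + 1) / 2) := by
  have h2 := two_mul_leaf_add_retic (V := Fin (N + 1)) A.2.1
  rw [Fintype.card_fin] at h2
  have h3 := retic_lt_leaf A.2
  rw [Finset.mem_Icc]
  omega

lemma term_eq (N : ℕ) (hN : N % 2 = 1) (n : ℕ)
    (hmem : n ∈ Finset.Icc ((N + 6) / 4) ((N + 1) / 2)) :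
    Nat.card {A : NodeLabeledTC N // Nat.card {v // IsLeaf A.1 v} = n} =
      (Nat.factorial N / Nat.factorial n) * TCcount n ((N + 1) / 2 - n) := by
  rw [Finset.mem_Icc] at hmem
  set k := (N + 1) / 2 - n with hk
  have hM : 2 * (n + k) = N + 1 := by omega
  have hpos : 0 < n + k := by omega
  have hcore : Nat.card {A : {adj : Fin (2 * (n + k)) → Fin (2 * (n + k)) → Prop //
      ∃ h : 0 < 2 * (n + k), IsTreeChildNetwork adj ⟨0, h⟩} //
        Nat.card {v // IsLeaf A.1 v} = n} =
      ((2 * (n + k) - 1).factorial / n.factorial) * TCcount n k := core n k hpos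
  rw [hM, Nat.add_sub_cancel] at hcore
  have esub : {A : {adj : Fin (N + 1) → Fin (N + 1) → Prop //
      ∃ h : 0 < N + 1, IsTreeChildNetwork adj ⟨0, h⟩} //
        Nat.card {v // IsLeaf A.1 v} = n} ≃
      {A : NodeLabeledTC N // Nat.card {v // IsLeaf A.1 v} = n} :=
    (Equiv.subtypeEquivRight (fun adj =>
      ⟨fun hh => by
        obtain ⟨h, htc⟩ := hh
        rwa [Fin.mk_zero] at htc,
       fun htc => ⟨N.succ_pos, by rwa [Fin.mk_zero]⟩⟩)).subtypeEquiv
      (fun A => Iff.rfl)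
  rw [← Nat.card_congr esub, hcore]

end TCaux

theorem TChat_eq_sum_TCcount (N : ℕ) (hN : N % 2 = 1) :
    TChat N = ∑ n ∈ Finset.Icc ((N + 6) / 4) ((N + 1) / 2),
      (Nat.factorial N / Nat.factorial n) * TCcount n ((N + 1) / 2 - n) := by
  rw [TChat, TCaux.card_eq_sum_fibers_finset
    (fun A : NodeLabeledTC N => Nat.card {v // IsLeaf A.1 v}) _
    (TCaux.leafcount_mem N hN)]
  exact Finset.sum_congr rfl (fun n hmem => TCaux.term_eq N hN n hmem)
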